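/- Let p ≥ 5 be prime and let τ = (1 2 … p) be a p-cycle in A_p. Then the normalizer N_{A_p}(⟨τ⟩) has order p(p-1)/2. -/

import Mathlib

open Equiv Equiv.Perm Subgroup

lemma centralizer_zpowers_cycle {α : Type*} [Fintype α] [DecidableEq α] {τ : Perm α}
    (hcyc : τ.IsCycle) (hsupp : ∀ x : α, τ x ≠ x) :
    Subgroup.centralizer (Subgroup.zpowers τ : Set (Perm α)) = Subgroup.zpowers τ := by
  apply le_antisymm
  · intro σ hσ
    have hc : Commute τ σ := Subgroup.mem_centralizer_iff.mp hσ τ (Subgroup.mem_zpowers τ)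
    have hcn : ∀ (n : ℤ) (y : α), σ ((τ ^ n) y) = (τ ^ n) (σ y) := by
      intro n y
      have := (hc.zpow_left n).symm
      calc σ ((τ ^ n) y) = (σ * τ ^ n) y := rfl
        _ = (τ ^ n * σ) y := by rw [this]
        _ = (τ ^ n) (σ y) := rfl
    obtain ⟨x0, hx0, hx⟩ := hcyc
    obtain ⟨k, hk⟩ := hx (hsupp (σ x0))
    rw [Subgroup.mem_zpowers_iff]
    refine ⟨k, Equiv.ext fun y => ?_⟩
    obtain ⟨n, hn⟩ := hx (hsupp y)
    calc (τ ^ k) y = (τ ^ k) ((τ ^ n) x0) := by rw [hn]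
      _ = (τ ^ n) ((τ ^ k) x0) := by
          rw [← Equiv.Perm.mul_apply, ← Equiv.Perm.mul_apply, ← zpow_add, ← zpow_add, add_comm]
      _ = (τ ^ n) (σ x0) := by rw [hk]
      _ = σ ((τ ^ n) x0) := (hcn n x0).symm
      _ = σ y := by rw [hn]
  · intro x hx
    rw [Subgroup.mem_centralizer_iff]
    intro h hh
    obtain ⟨m, rfl⟩ := hx
    obtain ⟨n, rfl⟩ := hh
    exact (Commute.zpow_zpow_self τ n m)

lemma card_normalizer_perm {p : ℕ} (hp : p.Prime) (hp5 : 5 ≤ p)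
    (τ : Perm (Fin p)) (hcyc : τ.IsCycle) (hcard : τ.support.card = p) :
    Nat.card (Subgroup.normalizer ((Subgroup.zpowers τ) : Set (Perm (Fin p)))) = p * (p - 1) := by
  haveI : Fact p.Prime := ⟨hp⟩
  have hord : orderOf τ = p := by rw [hcyc.orderOf, hcard]
  have hsupp : ∀ x : Fin p, τ x ≠ x := by
    intro x
    apply Equiv.Perm.mem_support.mp
    rw [Finset.eq_univ_of_card τ.support (by simp [hcard])]
    exact Finset.mem_univ x
  set K := Subgroup.zpowers τ with hK
  have cardK : Nat.card K = p := by rw [Nat.card_zpowers, hord]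
  set N := Subgroup.normalizer (K : Set (Perm (Fin p))) with hN
  set φ := K.normalizerMonoidHom with hφ
  have hker : φ.ker = K.subgroupOf N := by
    rw [hφ, Subgroup.normalizerMonoidHom_ker, centralizer_zpowers_cycle hcyc hsupp]
  have cardker : Nat.card φ.ker = p := by
    rw [hker]
    rw [Nat.card_congr (Subgroup.subgroupOfEquivOfLe Subgroup.le_normalizer).toEquiv]
    exact cardK
  -- surjectivity
  have hsurj : Function.Surjective φ := by
    intro ψ
    set t : K := ⟨τ, Subgroup.mem_zpowers τ⟩ with ht
    set w := ψ t with hw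
    have hordt : orderOf t = p := by
      have h1 := orderOf_injective K.subtype K.subtype_injective t
      exact h1.symm.trans hord
    have hwt : orderOf w = p := by
      have h2 := orderOf_injective ψ.toMonoidHom ψ.injective t
      exact h2.trans hordt
    have hwc : orderOf (w : Perm (Fin p)) = p := by
      have h3 := orderOf_injective K.subtype K.subtype_injective w
      exact h3.trans hwt
    have wcyc : (w : Perm (Fin p)).IsCycle := by
      apply Equiv.Perm.isCycle_of_prime_order'' <;> simp [hwc, hp]
    have wsupp : (w : Perm (Fin p)).support.card = p := by
      rw [← wcyc.orderOf, hwc]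
    obtain ⟨σ, hσ⟩ := isConj_iff.mp (hcyc.isConj wcyc (by rw [hcard, wsupp]))
    have hwK : (w : Perm (Fin p)) ∈ K := w.2
    have hzw : Subgroup.zpowers (w : Perm (Fin p)) = K :=
      Subgroup.eq_of_le_of_card_ge (Subgroup.zpowers_le.mpr hwK)
        (le_of_eq (by rw [cardK, Nat.card_zpowers, hwc]))
    have hτw : τ ∈ Subgroup.zpowers (w : Perm (Fin p)) := by
      rw [hzw]; exact Subgroup.mem_zpowers τ
    obtain ⟨j, hj⟩ := Subgroup.mem_zpowers_iff.mp hτw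
    -- hj : ↑w ^ j = τ
    have hτσ : σ⁻¹ * τ * σ = τ ^ j := by
      calc σ⁻¹ * τ * σ = σ⁻¹ * (w : Perm (Fin p)) ^ j * σ := by rw [hj]
        _ = σ⁻¹ * (σ * τ * σ⁻¹) ^ j * σ := by rw [hσ]
        _ = σ⁻¹ * (σ * τ ^ j * σ⁻¹) * σ := by rw [conj_zpow]
        _ = τ ^ j := by group
    have σmem : σ ∈ N := by
      rw [hN, Subgroup.mem_normalizer_iff]
      intro h
      constructor
      · intro hh
        obtain ⟨m, rfl⟩ := Subgroup.mem_zpowers_iff.mp hh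
        have : σ * τ ^ m * σ⁻¹ = (w : Perm (Fin p)) ^ m := by rw [← hσ, conj_zpow]
        rw [this]
        exact Subgroup.zpow_mem K hwK m
      · intro hh
        obtain ⟨m, hm⟩ := Subgroup.mem_zpowers_iff.mp hh
        have h1 : h = σ⁻¹ * τ ^ m * σ := by rw [hm]; group
        have h2 : h = (σ⁻¹ * τ * σ) ^ m := by
          rw [h1]
          have := @conj_zpow _ _ m σ⁻¹ τ
          rw [inv_inv] at this
          rw [this]
        rw [h2, hτσ, ← zpow_mul]
        exact Subgroup.zpow_mem K (Subgroup.mem_zpowers τ) _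
    refine ⟨⟨σ, σmem⟩, ?_⟩
    refine DFunLike.ext _ _ fun h => ?_
    obtain ⟨m, hm⟩ := Subgroup.mem_zpowers_iff.mp h.2
    have hh : h = t ^ m := Subtype.ext (by simpa using hm.symm)
    rw [hh, map_zpow, map_zpow]
    congr 1
    apply Subtype.ext
    show σ * τ * σ⁻¹ = ((ψ t : K) : Perm (Fin p))
    exact hσ
  -- cardinality computation
  have hrange : Nat.card (MulAut K) = p - 1 := by
    haveI : IsCyclic K := isCyclic_of_prime_card cardK
    rw [IsCyclic.card_mulAut, cardK, Nat.totient_prime hp]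
  have hcards := Subgroup.card_eq_card_quotient_mul_card_subgroup φ.ker
  have hq : Nat.card (N ⧸ φ.ker) = p - 1 := by
    rw [Nat.card_congr (QuotientGroup.quotientKerEquivOfSurjective φ hsurj).toEquiv, hrange]
  rw [hcards, hq, cardker, mul_comm]

/-- For a prime `p ≥ 5` and a `p`-cycle `τ ∈ A_p`, the normalizer
`N_{A_p}(⟨τ⟩)` has order `p(p-1)/2`. -/
theorem card_normalizer_alternatingGroup (p : ℕ) (hp : p.Prime) (hp5 : 5 ≤ p)
    (τ : Equiv.Perm (Fin p)) (hcyc : τ.IsCycle) (hcard : τ.support.card = p)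
    (hτA : τ ∈ alternatingGroup (Fin p)) :
    Nat.card (Subgroup.normalizer
      ((Subgroup.zpowers (⟨τ, hτA⟩ : alternatingGroup (Fin p))) : Set (alternatingGroup (Fin p)))) = p * (p - 1) / 2 := by
  haveI : Fact p.Prime := ⟨hp⟩
  have hp1 : 1 < p := hp.one_lt
  set A := alternatingGroup (Fin p) with hA
  set t : A := ⟨τ, hτA⟩ with htdef
  have hord : orderOf τ = p := by rw [hcyc.orderOf, hcard]
  haveI : Nontrivial (Fin p) := Fin.nontrivial_iff_two_le.mpr (by omega)
  -- cardinalities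
  have cardS : Nat.card (Perm (Fin p)) = p.factorial := by
    simp [Nat.card_eq_fintype_card, Fintype.card_perm]
  have cardA2 : 2 * Nat.card A = p.factorial := by
    have := two_mul_card_alternatingGroup (α := Fin p)
    rw [Nat.card_eq_fintype_card, this, Fintype.card_perm, Fintype.card_fin]
  -- factorization facts
  have hfacfac : (p.factorial).factorization p = 1 := by
    have hps : p - 1 + 1 = p := by omega
    have h1 : p.factorial = p * (p-1).factorial := by
      conv_lhs => rw [← hps, Nat.factorial_succ, hps]
    rw [h1, Nat.factorization_mul (by omega) (Nat.factorial_ne_zero _)]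
    have h2 : (p.factorization) p = 1 := by
      rw [hp.factorization, Finsupp.single_eq_same]
    have h3 : ((p-1).factorial).factorization p = 0 := by
      apply Nat.factorization_eq_zero_of_not_dvd
      rw [hp.dvd_factorial]
      omega
    simp [h2, h3]
  have hfacS : (Nat.card (Perm (Fin p))).factorization p = 1 := by rw [cardS]; exact hfacfac
  have hfacA : (Nat.card A).factorization p = 1 := by
    have h2 : (2 * Nat.card A).factorization p = 1 := by rw [cardA2]; exact hfacfac
    have hA0 : Nat.card A ≠ 0 := Nat.card_pos.ne'
    rw [Nat.factorization_mul (by norm_num) hA0] at h2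
    have h3 : (2 : ℕ).factorization p = 0 := by
      apply Nat.factorization_eq_zero_of_not_dvd
      intro h
      have := Nat.le_of_dvd (by norm_num) h
      omega
    simpa [h3] using h2
  -- Sylow subgroups
  have cardK : Nat.card (Subgroup.zpowers τ) = p := by rw [Nat.card_zpowers, hord]
  have hordt : orderOf t = p := by
    have h1 := orderOf_injective A.subtype A.subtype_injective t
    exact h1.symm.trans hord
  have cardKA : Nat.card (Subgroup.zpowers t) = p := by rw [Nat.card_zpowers, hordt]
  let PS : Sylow p (Perm (Fin p)) :=
    Sylow.ofCard (Subgroup.zpowers τ) (by rw [cardK, hfacS, pow_one])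
  let PA : Sylow p A := Sylow.ofCard (Subgroup.zpowers t) (by rw [cardKA, hfacA, pow_one])
  -- every Sylow p-subgroup of Perm (Fin p) lies in A
  have sylA : ∀ Q : Sylow p (Perm (Fin p)), (Q : Subgroup (Perm (Fin p))) ≤ A := by
    intro Q g hg
    rcases eq_or_ne g 1 with rfl | hg1
    · exact A.one_mem
    · have hcardQ : Nat.card Q = p := by rw [Q.card_eq_multiplicity, hfacS, pow_one]
      have hog : orderOf g = p := by
        have hdvd := orderOf_dvd_natCard (⟨g, hg⟩ : (Q : Subgroup (Perm (Fin p))))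
        rw [hcardQ] at hdvd
        have hco := orderOf_injective (Q : Subgroup (Perm (Fin p))).subtype
          (Subgroup.subtype_injective _) (⟨g, hg⟩ : (Q : Subgroup (Perm (Fin p))))
        rcases (Nat.Prime.eq_one_or_self_of_dvd hp _ hdvd) with h | h
        · exact absurd (orderOf_eq_one_iff.mp (hco.trans h)) hg1
        · exact hco.trans h
      have hgcyc : g.IsCycle := by
        apply Equiv.Perm.isCycle_of_prime_order'' <;> simp [hog, hp]
      have hsup : g.support.card = p := by rw [← hgcyc.orderOf, hog]
      have : Equiv.Perm.sign g = 1 := by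
        rw [hgcyc.sign, hsup, (hp.odd_of_ne_two (by omega)).neg_one_pow]
        norm_num
      exact Equiv.Perm.mem_alternatingGroup.mpr this
  -- bijection between Sylow subgroups of Perm (Fin p) and of A
  have hbij : Nat.card (Sylow p (Perm (Fin p))) = Nat.card (Sylow p A) := by
    apply Nat.card_eq_of_bijective (fun Q => Q.subtype (sylA Q))
    constructor
    · intro Q1 Q2 h
      exact Sylow.subtype_injective h
    · intro R
      have hcardR : Nat.card R = p := by rw [R.card_eq_multiplicity, hfacA, pow_one]
      have hcardM : Nat.card ((R : Subgroup A).map A.subtype) = p :=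
        (Nat.card_congr (Subgroup.equivMapOfInjective (R : Subgroup A) A.subtype
          A.subtype_injective).toEquiv.symm).trans hcardR
      refine ⟨Sylow.ofCard ((R : Subgroup A).map A.subtype)
        (by rw [hcardM, hfacS, pow_one]), ?_⟩
      apply Sylow.ext
      rw [Sylow.coe_subtype, Sylow.coe_ofCard]
      exact (Subgroup.comap_map_eq_self_of_injective A.subtype_injective _)
  -- index identities
  have hNS := Sylow.card_eq_index_normalizer PS
  have hNA := Sylow.card_eq_index_normalizer PA
  have hPScoe : (PS : Subgroup (Perm (Fin p))) = Subgroup.zpowers τ := Sylow.coe_ofCard _ _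
  have hPAcoe : (PA : Subgroup A) = Subgroup.zpowers t := Sylow.coe_ofCard _ _
  rw [show (PS : Set (Perm (Fin p))) = (Subgroup.zpowers τ : Set (Perm (Fin p))) by rw [← hPScoe]; rfl] at hNS
  rw [show (PA : Set A) = (Subgroup.zpowers t : Set A) by rw [← hPAcoe]; rfl] at hNA
  have hmulS := Subgroup.card_mul_index (Subgroup.normalizer ((Subgroup.zpowers τ) : Set (Perm (Fin p))))
  have hmulA := Subgroup.card_mul_index (Subgroup.normalizer ((Subgroup.zpowers t) : Set A))
  rw [← hNS, cardS] at hmulS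
  rw [← hNA] at hmulA
  have hNSval : Nat.card (Subgroup.normalizer ((Subgroup.zpowers τ) : Set (Perm (Fin p)))) = p * (p - 1) :=
    card_normalizer_perm hp hp5 τ hcyc hcard
  have hApos : 0 < Nat.card (Sylow p A) := Nat.card_pos
  have key : 2 * Nat.card (Subgroup.normalizer ((Subgroup.zpowers t) : Set A)) * Nat.card (Sylow p A)
      = p * (p - 1) * Nat.card (Sylow p A) := by
    calc 2 * Nat.card (Subgroup.normalizer ((Subgroup.zpowers t) : Set A)) * Nat.card (Sylow p A)
        = 2 * (Nat.card (Subgroup.normalizer ((Subgroup.zpowers t) : Set A)) * Nat.card (Sylow p A)) := by ring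
      _ = 2 * Nat.card A := by rw [hmulA]
      _ = p.factorial := cardA2
      _ = Nat.card (Subgroup.normalizer ((Subgroup.zpowers τ) : Set (Perm (Fin p)))) * Nat.card (Sylow p (Perm (Fin p))) :=
          hmulS.symm
      _ = p * (p - 1) * Nat.card (Sylow p A) := by rw [hNSval, hbij]
  have key2 : 2 * Nat.card (Subgroup.normalizer ((Subgroup.zpowers t) : Set A)) = p * (p - 1) :=
    Nat.eq_of_mul_eq_mul_right hApos key
  exact (Nat.div_eq_of_eq_mul_left (by norm_num) (by rw [← key2, mul_comm])).symm
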